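/- Let T(a,b) = ((1−ε)/ε)·√((σ²+λ²+σ²λ²)/(λ²σ²))·exp(−(σ²a + λ²b)²/(2σ²λ²(σ²+λ²+σ²λ²))) and f(a,b) = (σ²a + λ²b)/(σ²+λ²+σ²λ²). Then the partial derivative of T(a,b)·f(a,b) with respect to a is bounded: |∂/∂a[T(a,b)f(a,b)]| ≤ (2σ²/√ν)·(1−ε)/ε ≤ (2/λ)·(1−ε)/ε, where ν = σ²λ²(σ²+λ²+σ²λ²). -/

import Mathlib

set_option maxHeartbeats 1000000

/-- Bound on the partial derivative in a of T(a,b)·f(a,b) for the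
Bernoulli-Gaussian denoiser:
|∂/∂a [T f]| ≤ (2σ²/√ν)·(1−ε)/ε ≤ (2/λ)·(1−ε)/ε where ν = σ²λ²(σ²+λ²+σ²λ²). -/
theorem stmt_10 (ε σ l : ℝ) (hε : 0 < ε) (hε1 : ε < 1) (hσ : 0 < σ) (hl : 0 < l) :
    ∀ a b : ℝ,
      |deriv (fun a' : ℝ =>
          (((1 - ε) / ε) * Real.sqrt ((σ ^ 2 + l ^ 2 + σ ^ 2 * l ^ 2) / (l ^ 2 * σ ^ 2)) *
            Real.exp (-(σ ^ 2 * a' + l ^ 2 * b) ^ 2 /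
              (2 * (σ ^ 2 * l ^ 2 * (σ ^ 2 + l ^ 2 + σ ^ 2 * l ^ 2))))) *
          ((σ ^ 2 * a' + l ^ 2 * b) / (σ ^ 2 + l ^ 2 + σ ^ 2 * l ^ 2))) a| ≤
        2 * σ ^ 2 / Real.sqrt (σ ^ 2 * l ^ 2 * (σ ^ 2 + l ^ 2 + σ ^ 2 * l ^ 2)) *
          ((1 - ε) / ε) ∧
      2 * σ ^ 2 / Real.sqrt (σ ^ 2 * l ^ 2 * (σ ^ 2 + l ^ 2 + σ ^ 2 * l ^ 2)) *
          ((1 - ε) / ε) ≤ 2 / l * ((1 - ε) / ε) := by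
  intro a b
  set S : ℝ := σ ^ 2 + l ^ 2 + σ ^ 2 * l ^ 2 with hSdef
  have hS : 0 < S := by positivity
  set ν : ℝ := σ ^ 2 * l ^ 2 * S with hνdef
  have hν : 0 < ν := by positivity
  have hCε : 0 ≤ (1 - ε) / ε := div_nonneg (by linarith) hε.le
  set C : ℝ := ((1 - ε) / ε) * Real.sqrt (S / (l ^ 2 * σ ^ 2)) with hCdef
  have hC : 0 ≤ C := mul_nonneg hCε (Real.sqrt_nonneg _)
  set u : ℝ := σ ^ 2 * a + l ^ 2 * b with hudef
  -- derivative computation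
  have hu : HasDerivAt (fun a' : ℝ => σ ^ 2 * a' + l ^ 2 * b) (σ ^ 2) a := by
    simpa using ((hasDerivAt_id a).const_mul (σ ^ 2)).add_const (l ^ 2 * b)
  have hq : HasDerivAt (fun a' : ℝ => -(σ ^ 2 * a' + l ^ 2 * b) ^ 2 / (2 * ν))
      (-(2 * u * σ ^ 2) / (2 * ν)) a := by
    have h := ((hu.pow 2).neg).div_const (2 * ν)
    exact h.congr_deriv (by rw [hudef]; norm_num)
  have h1 : HasDerivAt (fun a' : ℝ =>
      C * Real.exp (-(σ ^ 2 * a' + l ^ 2 * b) ^ 2 / (2 * ν)))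
      (C * (Real.exp (-u ^ 2 / (2 * ν)) * (-(2 * u * σ ^ 2) / (2 * ν)))) a :=
    (hq.exp).const_mul C
  have h2 : HasDerivAt (fun a' : ℝ => (σ ^ 2 * a' + l ^ 2 * b) / S) (σ ^ 2 / S) a :=
    hu.div_const S
  have H := h1.mul h2
  have hderiv : deriv (fun a' : ℝ =>
      (C * Real.exp (-(σ ^ 2 * a' + l ^ 2 * b) ^ 2 / (2 * ν))) *
        ((σ ^ 2 * a' + l ^ 2 * b) / S)) a
      = C * (Real.exp (-u ^ 2 / (2 * ν)) * (-(2 * u * σ ^ 2) / (2 * ν))) * (u / S) +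
        (C * Real.exp (-u ^ 2 / (2 * ν))) * (σ ^ 2 / S) := H.deriv
  set E : ℝ := Real.exp (-u ^ 2 / (2 * ν)) with hEdef
  have hE : 0 < E := Real.exp_pos _
  set x : ℝ := u ^ 2 / (2 * ν) with hxdef
  have hx : 0 ≤ x := by positivity
  -- value of the derivative
  have hval : C * (E * (-(2 * u * σ ^ 2) / (2 * ν))) * (u / S) + (C * E) * (σ ^ 2 / S)
      = C * (σ ^ 2 / S) * (E * (1 - 2 * x)) := by
    rw [hxdef]
    field_simp
    ring
  -- key exponential bound
  have hkey : E * |1 - 2 * x| ≤ 2 := by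
    have h1 : |1 - 2 * x| ≤ 2 + 2 * x := by
      rw [abs_le]; constructor <;> nlinarith
    have h2 : E * (2 + 2 * x) ≤ 2 := by
      have hexp : 1 + x ≤ Real.exp x := by linarith [Real.add_one_le_exp x]
      have hEx : E = Real.exp (-x) := by rw [hEdef, hxdef]; ring_nf
      calc E * (2 + 2 * x) = (2 + 2 * x) / Real.exp x := by
            rw [hEx, Real.exp_neg]; ring
        _ ≤ 2 := by rw [div_le_iff₀ (Real.exp_pos x)]; nlinarith
    calc E * |1 - 2 * x| ≤ E * (2 + 2 * x) := by
          exact mul_le_mul_of_nonneg_left h1 hE.le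
      _ ≤ 2 := h2
  -- sqrt algebra
  have hsql : Real.sqrt (l ^ 2 * σ ^ 2) = l * σ := by
    rw [Real.sqrt_mul (sq_nonneg l), Real.sqrt_sq hl.le, Real.sqrt_sq hσ.le]
  have hsqS : 0 < Real.sqrt S := Real.sqrt_pos.mpr hS
  have hsqν : Real.sqrt ν = σ * l * Real.sqrt S := by
    rw [hνdef, show σ ^ 2 * l ^ 2 * S = (σ * l) ^ 2 * S by ring,
      Real.sqrt_mul (sq_nonneg _), Real.sqrt_sq (by positivity)]
  have hsqdiv : Real.sqrt (S / (l ^ 2 * σ ^ 2)) = Real.sqrt S / (l * σ) := by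
    rw [Real.sqrt_div hS.le, hsql]
  -- the constant identity
  have hconst : C * (σ ^ 2 / S) * 2
      = 2 * σ ^ 2 / Real.sqrt ν * ((1 - ε) / ε) := by
    have hsq : Real.sqrt S * Real.sqrt S = S := Real.mul_self_sqrt hS.le
    have key : Real.sqrt S / (l * σ) * (σ ^ 2 / S) * 2
        = 2 * σ ^ 2 / (σ * l * Real.sqrt S) := by
      field_simp
      linear_combination hsq
    calc C * (σ ^ 2 / S) * 2
        = ((1 - ε) / ε) * (Real.sqrt S / (l * σ) * (σ ^ 2 / S) * 2) := by
          rw [hCdef, hsqdiv]; ring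
      _ = 2 * σ ^ 2 / Real.sqrt ν * ((1 - ε) / ε) := by rw [key, hsqν]; ring
  constructor
  · rw [hderiv, hval, abs_mul]
    have hCn : 0 ≤ C * (σ ^ 2 / S) := mul_nonneg hC (by positivity)
    rw [abs_of_nonneg hCn, abs_mul, abs_of_pos hE]
    calc C * (σ ^ 2 / S) * (E * |1 - 2 * x|)
        ≤ C * (σ ^ 2 / S) * 2 := mul_le_mul_of_nonneg_left hkey hCn
      _ = 2 * σ ^ 2 / Real.sqrt ν * ((1 - ε) / ε) := hconst
  · have hle : 2 * σ ^ 2 / Real.sqrt ν ≤ 2 / l := by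
      have hσS : σ ≤ Real.sqrt S := by
        rw [show σ = Real.sqrt (σ ^ 2) from (Real.sqrt_sq hσ.le).symm]
        exact Real.sqrt_le_sqrt (by nlinarith [sq_nonneg l, sq_nonneg (σ*l)])
      have hd : σ ^ 2 * l ≤ Real.sqrt ν := by
        rw [hsqν]
        nlinarith [mul_le_mul_of_nonneg_left hσS (mul_pos hσ hl).le]
      calc 2 * σ ^ 2 / Real.sqrt ν ≤ 2 * σ ^ 2 / (σ ^ 2 * l) :=
            div_le_div_of_nonneg_left (by positivity) (by positivity) hd
        _ = 2 / l := by field_simp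
    exact mul_le_mul_of_nonneg_right hle hCε
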